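/- For a ≥ 2, if l ∈ ⟨a, a+1⟩ is divisible in two distinct ways, i.e., l = a*x + y = a*x' + y' with y ≤ x, y' ≤ x' and (x, y) ≠ (x', y'), then l - a(a-1) + 1 ∈ ⟨a, a+1⟩. -/
import Mathlib


def Lam (a : ℕ) : Set ℕ := {n | ∃ i j : ℕ, n = i * a + j * (a + 1)}

lemma lam_aux (a x y : ℕ) (ha : 2 ≤ a) (h : y + a + 1 ≤ x) :
    a * x + y + 1 - a * (a - 1) ∈ Lam a := by
  refine ⟨x - a - y, y + 1, ?_⟩
  have h1 : a - 1 ≤ x := by omega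
  have h2 : a * (a - 1) ≤ a * x := Nat.mul_le_mul_left a h1
  have h3 : a ≤ x := by omega
  have h4 : y ≤ x - a := by omega
  have h5 : 1 ≤ a := by omega
  zify [h1, h2, h3, h4, h5, show a * (a-1) ≤ a * x + y + 1 by omega]
  ring

theorem stmt12 (a x y x' y' : ℕ) (ha : 2 ≤ a) (h1 : y ≤ x) (h2 : y' ≤ x')
    (hne : (x, y) ≠ (x', y')) (heq : a * x + y = a * x' + y') :
    a * x + y + 1 - a * (a - 1) ∈ Lam a := by
  rcases lt_trichotomy x x' with h | h | h
  · have hmul : a * (x' - x) = a * x' - a * x := by rw [Nat.mul_sub]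
    have hle : a * x ≤ a * x' := Nat.mul_le_mul_left a h.le
    have ha1 : a * 1 ≤ a * (x' - x) := Nat.mul_le_mul_left a (by omega)
    have hx : y' + a + 1 ≤ x' := by omega
    have := lam_aux a x' y' ha hx
    rwa [heq]
  · subst h; exact absurd (by rw [show y = y' by omega]) hne
  · have hmul : a * (x - x') = a * x - a * x' := by rw [Nat.mul_sub]
    have hle : a * x' ≤ a * x := Nat.mul_le_mul_left a h.le
    have ha1 : a * 1 ≤ a * (x - x') := Nat.mul_le_mul_left a (by omega)
    have hx : y + a + 1 ≤ x := by omega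
    exact lam_aux a x y ha hx
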